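/- arXiv:1512.02612 — 3 statements merged into one kernel-verified Lean document; each statement's English description precedes it below -/
import Mathlib

section
/- Let X be a metric space and f : X → X a topologically transitive homeomorphism. Then for every continuous function τ : X → (0,∞), the suspension flow φ^τ on the suspension X̂ is topologically transitive: there exists a point p ∈ X̂ whose flow orbit {φ^τ_t(p) : t ∈ ℝ} is dense in X̂. In fact, if x ∈ X has dense f-orbit, then q(x,0) has dense φ^τ-orbit. -/
/-- The relation generating the suspension equivalence: `(x, s + τ(x)) ∼ (f(x), s)`.
The suspension `X̂` is `Quot (susRel f τ)` with the quotient topology, and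
`Quot.mk (susRel f τ)` is the quotient map `q : X × ℝ → X̂`. -/
def susRel {X : Type*} (f : X → X) (τ : X → ℝ) : X × ℝ → X × ℝ → Prop :=
  fun p q => ∃ y s, p = (y, s + τ y) ∧ q = (f y, s)

/-- The suspension flow `φ^τ_t` on the suspension `X̂ = Quot (susRel f τ)`, induced by
the flow `(x, s) ↦ (x, s + t)` on `X × ℝ`. -/
def susFlow {X : Type*} (f : X → X) (τ : X → ℝ) (t : ℝ) :
    Quot (susRel f τ) → Quot (susRel f τ) :=
  Quot.lift (fun p => Quot.mk (susRel f τ) (p.1, p.2 + t)) (by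
    rintro ⟨a, b⟩ ⟨c, d⟩ ⟨y, s, h₁, h₂⟩
    rw [h₁, h₂]
    exact Quot.sound ⟨y, s + t, by rw [Prod.mk.injEq]; exact ⟨rfl, by ring⟩, rfl⟩)


private lemma susKey {X : Type*} [TopologicalSpace X] (f : X ≃ₜ X) (τ : X → ℝ) (x : X) :
    ∀ n : ℤ, ∀ s : ℝ, ∃ t : ℝ,
      Quot.mk (susRel (⇑f) τ) (x, t) = Quot.mk (susRel (⇑f) τ) ((f.toEquiv ^ n) x, s) := by
  intro n
  induction n using Int.induction_on with
  | zero => intro s; exact ⟨s, by simp⟩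
  | succ n ih =>
    intro s
    obtain ⟨t, ht⟩ := ih (s + τ ((f.toEquiv ^ (n : ℤ)) x))
    refine ⟨t, ht.trans ?_⟩
    have h1 : (f.toEquiv ^ ((n : ℤ) + 1)) x = f ((f.toEquiv ^ (n : ℤ)) x) := by
      rw [add_comm, zpow_one_add]
      simp
    rw [h1]
    exact Quot.sound ⟨(f.toEquiv ^ (n : ℤ)) x, s, rfl, rfl⟩
  | pred n ih =>
    intro s
    obtain ⟨t, ht⟩ := ih (s - τ ((f.toEquiv ^ (-(n : ℤ) - 1)) x))
    refine ⟨t, ht.trans ?_⟩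
    have h1 : f ((f.toEquiv ^ (-(n : ℤ) - 1)) x) = (f.toEquiv ^ (-(n : ℤ))) x := by
      have : (-(n : ℤ)) = 1 + (-(n : ℤ) - 1) := by ring
      rw [this, zpow_add]
      simp [Equiv.Perm.mul_apply]
    have h2 : Quot.mk (susRel (⇑f) τ) ((f.toEquiv ^ (-(n : ℤ) - 1)) x, s)
        = Quot.mk (susRel (⇑f) τ) (f ((f.toEquiv ^ (-(n : ℤ) - 1)) x),
            s - τ ((f.toEquiv ^ (-(n : ℤ) - 1)) x)) :=
      Quot.sound ⟨(f.toEquiv ^ (-(n : ℤ) - 1)) x,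
        s - τ ((f.toEquiv ^ (-(n : ℤ) - 1)) x), by simp, rfl⟩
    rw [h1] at h2
    exact h2.symm

/-- Let `X` be a metric space and `f : X → X` a topologically transitive homeomorphism
(there is a point whose orbit `{fⁿ x : n ∈ ℤ}` is dense). Then for every continuous
`τ : X → (0, ∞)`, the suspension flow `φ^τ` on the suspension `X̂` is topologically
transitive: there exists `p ∈ X̂` whose flow orbit `{φ^τ_t(p) : t ∈ ℝ}` is dense in `X̂`.
In fact, if `x ∈ X` has dense `f`-orbit, then `q(x, 0)` has dense `φ^τ`-orbit. -/
theorem suspension_flow_topologically_transitive {X : Type*} [MetricSpace X]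
    (f : X ≃ₜ X)
    (hf_trans : ∃ x₀ : X, Dense (Set.range fun n : ℤ => (f.toEquiv ^ n) x₀))
    (τ : X → ℝ) (hτ_cont : Continuous τ) (hτ_pos : ∀ x, 0 < τ x) :
    (∃ p : Quot (susRel (⇑f) τ),
      Dense (Set.range fun t : ℝ => susFlow (⇑f) τ t p)) ∧
    (∀ x : X, Dense (Set.range fun n : ℤ => (f.toEquiv ^ n) x) →
      Dense (Set.range fun t : ℝ =>
        susFlow (⇑f) τ t (Quot.mk (susRel (⇑f) τ) (x, 0)))) := by
  have main : ∀ x : X, Dense (Set.range fun n : ℤ => (f.toEquiv ^ n) x) →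
      Dense (Set.range fun t : ℝ =>
        susFlow (⇑f) τ t (Quot.mk (susRel (⇑f) τ) (x, 0))) := by
    intro x hx
    have hdense : Dense ((Set.range fun n : ℤ => (f.toEquiv ^ n) x) ×ˢ (Set.univ : Set ℝ)) :=
      hx.prod dense_univ
    have hq : Dense (Quot.mk (susRel (⇑f) τ) ''
        ((Set.range fun n : ℤ => (f.toEquiv ^ n) x) ×ˢ (Set.univ : Set ℝ))) :=
      (Quot.mk_surjective.denseRange.dense_image continuous_quot_mk hdense)
    refine hq.mono ?_
    rintro p ⟨⟨y, r⟩, ⟨⟨n, rfl⟩, -⟩, rfl⟩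
    obtain ⟨t, ht⟩ := susKey f τ x n r
    exact ⟨t, by simpa [susFlow] using ht⟩
  obtain ⟨x₀, hx₀⟩ := hf_trans
  exact ⟨⟨Quot.mk _ (x₀, 0), main x₀ hx₀⟩, main⟩
end

section
/- Let X and Y be compact metric spaces and let f : X → X and π : X → Y be continuous maps satisfying π ∘ f = π. Then h_top(f) = sup_{y ∈ Y} h_top(f restricted to π^{−1}(y)). -/
open Dynamics Set Uniformity UniformSpace Filter ENNReal SetRel

section Aux

variable {X : Type*}

private lemma isDynCoverOf_mono_set {T : X → X} {F G : Set X} {U : Set (X × X)} {n : ℕ}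
    {s : Set X} (hFG : F ⊆ G) (h : IsDynCoverOf T G U n s) : IsDynCoverOf T F U n s :=
  hFG.trans h

private lemma coverMincard_mono_set (T : X → X) {F G : Set X} (hFG : F ⊆ G) (U : Set (X × X))
    (n : ℕ) : coverMincard T F U n ≤ coverMincard T G U n :=
  biInf_mono fun _ h ↦ isDynCoverOf_mono_set hFG h

private lemma coverEntropyEntourage_mono_set (T : X → X) {F G : Set X} (hFG : F ⊆ G)
    (U : Set (X × X)) : coverEntropyEntourage T F U ≤ coverEntropyEntourage T G U :=
  limsup_le_limsup (Eventually.of_forall fun n ↦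
    EReal.monotone_div_right_of_nonneg (Nat.cast_nonneg' n)
      (log_monotone (ENat.toENNReal_mono (coverMincard_mono_set T hFG U n))))

private lemma coverMincard_union_le (T : X → X) (F G : Set X) (U : Set (X × X)) (n : ℕ) :
    coverMincard T (F ∪ G) U n ≤ coverMincard T F U n + coverMincard T G U n := by
  classical
  rcases eq_top_or_lt_top (coverMincard T F U n) with h | hF
  · simp [h]
  rcases eq_top_or_lt_top (coverMincard T G U n) with h | hG
  · simp [h]
  obtain ⟨s, s_cover, s_card⟩ := (coverMincard_finite_iff T F U n).1 hF
  obtain ⟨t, t_cover, t_card⟩ := (coverMincard_finite_iff T G U n).1 hG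
  have hst : IsDynCoverOf T (F ∪ G) U n ↑(s ∪ t) := by
    apply Set.union_subset
    · intro x hx
      obtain ⟨z, hz, hxz⟩ := s_cover hx
      exact ⟨z, by simp [hz], hxz⟩
    · intro x hx
      obtain ⟨z, hz, hxz⟩ := t_cover hx
      exact ⟨z, by simp [hz], hxz⟩
  calc coverMincard T (F ∪ G) U n ≤ ((s ∪ t).card : ℕ∞) := hst.coverMincard_le_card
    _ ≤ ((s.card + t.card : ℕ) : ℕ∞) := by exact_mod_cast Finset.card_union_le s t
    _ = coverMincard T F U n + coverMincard T G U n := by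
        rw [Nat.cast_add, s_card, t_card]

private lemma log_add_le_aux (x y : ℝ≥0∞) : log (x + y) ≤ log 2 + max (log x) (log y) := by
  have h : x + y ≤ 2 * max x y := by
    rw [two_mul]
    exact add_le_add (le_max_left x y) (le_max_right x y)
  apply (log_monotone h).trans_eq
  rw [log_mul_add, log_monotone.map_max]

private lemma coverEntropyEntourage_union_le (T : X → X) (F G : Set X) (U : Set (X × X)) :
    coverEntropyEntourage T (F ∪ G) U ≤
      max (coverEntropyEntourage T F U) (coverEntropyEntourage T G U) := by
  rcases F.eq_empty_or_nonempty with rfl | hF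
  · rw [Set.empty_union]; exact le_max_right _ _
  rcases G.eq_empty_or_nonempty with rfl | hG
  · rw [Set.union_empty]; exact le_max_left _ _
  set a := fun n : ℕ ↦ log (coverMincard T F U n) / (n : EReal) with ha
  set b := fun n : ℕ ↦ log (coverMincard T G U n) / (n : EReal) with hb
  set u := fun n : ℕ ↦ (log 2 : EReal) / (n : EReal) with hu
  set v := fun n : ℕ ↦ max (a n) (b n) with hv
  have key : (fun n : ℕ ↦ log (coverMincard T (F ∪ G) U n) / (n : EReal)) ≤ᶠ[atTop] u + v := by
    filter_upwards [eventually_ge_atTop 1] with n hn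
    have hF1 : (0 : EReal) ≤ log (coverMincard T F U n) := by
      rw [zero_le_log_iff, ← ENat.toENNReal_one]
      exact ENat.toENNReal_mono ((one_le_coverMincard_iff T F U n).2 hF)
    have h2 : log (coverMincard T (F ∪ G) U n)
        ≤ log 2 + max (log (coverMincard T F U n)) (log (coverMincard T G U n)) := by
      refine le_trans ?_ (log_add_le_aux _ _)
      apply log_monotone
      rw [← ENat.toENNReal_add]
      exact ENat.toENNReal_mono (Dynamics.coverMincard_union_le T F G U n)
    calc log (coverMincard T (F ∪ G) U n) / (n : EReal)
        ≤ (log 2 + max (log (coverMincard T F U n)) (log (coverMincard T G U n))) / (n : EReal) :=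
          EReal.monotone_div_right_of_nonneg (Nat.cast_nonneg' n) h2
      _ = (log 2 : EReal) / (n : EReal)
          + max (log (coverMincard T F U n)) (log (coverMincard T G U n)) / (n : EReal) :=
          EReal.div_right_distrib_of_nonneg (by simp) (le_max_of_le_left hF1)
      _ = (u + v) n := by
          have := (EReal.monotone_div_right_of_nonneg
            (b := (n : EReal)) (Nat.cast_nonneg' n)).map_max
            (a := log (coverMincard T F U n)) (b := log (coverMincard T G U n))
          simp only [Pi.add_apply, hu, hv, ha, hb]
          rw [this]
  refine (limsup_le_limsup key).trans ?_
  have hu0 : atTop.limsup u = 0 := Tendsto.limsup_eq (EReal.tendsto_const_div_atTop_nhds_zero_nat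
    (by simp) (by simp))
  have hadd := @EReal.limsup_add_le ℕ atTop u v (Or.inl (by rw [hu0]; exact EReal.zero_ne_bot))
    (Or.inl (by rw [hu0]; exact EReal.zero_ne_top))
  refine hadd.trans ?_
  rw [hu0, zero_add, hv]
  exact (limsup_max).le

private lemma coverEntropy_mono_set [UniformSpace X] (T : X → X) {F G : Set X} (hFG : F ⊆ G) :
    coverEntropy T F ≤ coverEntropy T G :=
  iSup₂_mono fun U _ ↦ coverEntropyEntourage_mono_set T hFG U

private lemma coverEntropyEntourage_biUnion_le {ι : Type*} (T : X → X) (G : ι → Set X)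
    (U : Set (X × X)) (t : Finset ι) {c : EReal}
    (h : ∀ i ∈ t, coverEntropyEntourage T (G i) U ≤ c) :
    coverEntropyEntourage T (⋃ i ∈ t, G i) U ≤ c := by
  classical
  revert h
  induction t using Finset.induction_on with
  | empty => intro _; simp
  | insert _ _ hx ih =>
    intro h
    rw [Finset.set_biUnion_insert]
    refine (coverEntropyEntourage_union_le T _ _ U).trans (max_le
      (h _ (Finset.mem_insert_self _ _)) (ih fun i hi ↦ h i (Finset.mem_insert_of_mem hi)))

end Aux

/-- Let `X` and `Y` be compact metric spaces and `f : X → X`, `π : X → Y` continuous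
maps with `π ∘ f = π`. Then `h_top(f) = sup_{y ∈ Y} h_top(f|_{π⁻¹(y)})`. -/
theorem entropy_eq_iSup_entropy_on_fibers {X Y : Type*}
    [MetricSpace X] [CompactSpace X] [MetricSpace Y] [CompactSpace Y]
    (f : X → X) (hf : Continuous f)
    (π : X → Y) (hπ : Continuous π) (hcomm : π ∘ f = π) :
    coverEntropy f Set.univ = ⨆ y : Y, coverEntropy f (π ⁻¹' {y}) := by
  have hfiber_inv : ∀ s : Set Y, Set.MapsTo f (π ⁻¹' s) (π ⁻¹' s) := fun s x hx ↦ by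
    have hfx : π (f x) = π x := congrFun hcomm x
    simpa [Set.mem_preimage, hfx] using hx
  refine le_antisymm ?_ (iSup_le fun y ↦ coverEntropy_mono_set f (Set.subset_univ _))
  set S := ⨆ y : Y, coverEntropy f (π ⁻¹' {y}) with hS
  refine iSup₂_le fun U hU ↦ ?_
  refine le_of_forall_gt_imp_ge_of_dense fun c hc ↦ ?_
  obtain ⟨V, V_uni, V_symm, V_U⟩ := comp_symm_mem_uniformity_sets hU
  obtain ⟨V₀, ⟨V₀_uni, V₀_open⟩, V₀_V⟩ := (uniformity_hasBasis_open).mem_iff.1 V_uni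
  have key : ∀ y : Y, ∃ (n : ℕ) (s : Finset X) (W : Set Y), 0 < n ∧ IsOpen W ∧ y ∈ W ∧
      IsDynCoverOf f (π ⁻¹' W) V₀ n s ∧ log s.card / (n : EReal) < c := by
    intro y
    have fib_comp : IsCompact (π ⁻¹' {y}) := (isClosed_singleton.preimage hπ).isCompact
    have fib_inv := hfiber_inv {y}
    have h1 : atTop.liminf (fun n : ℕ ↦ log (coverMincard f (π ⁻¹' {y}) V₀ n) / (n : EReal))
        < c := by
      apply lt_of_le_of_lt _ hc
      calc atTop.liminf (fun n : ℕ ↦ log (coverMincard f (π ⁻¹' {y}) V₀ n) / (n : EReal))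
          = coverEntropyInfEntourage f (π ⁻¹' {y}) V₀ := rfl
        _ ≤ coverEntropyInf f (π ⁻¹' {y}) :=
            coverEntropyInfEntourage_le_coverEntropyInf f _ V₀_uni
        _ ≤ coverEntropy f (π ⁻¹' {y}) := coverEntropyInf_le_coverEntropy f _
        _ ≤ S := le_iSup (fun y ↦ coverEntropy f (π ⁻¹' {y})) y
    obtain ⟨n, hn1, hn2⟩ :=
      ((frequently_lt_of_liminf_lt (u := fun n : ℕ ↦ log (coverMincard f (π ⁻¹' {y}) V₀ n) / (n : EReal)) (by isBoundedDefault) h1).and_eventually (eventually_ge_atTop 1)).exists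
    obtain ⟨s, s_cover, s_card⟩ := (coverMincard_finite_iff f _ V₀ n).1
      (coverMincard_finite_of_isCompact_invariant fib_comp fib_inv V₀_uni n)
    have A_open : IsOpen (⋃ x ∈ s, {z | (z, x) ∈ dynEntourage f V₀ n}) :=
      isOpen_biUnion fun x _ ↦ (isOpen.dynEntourage hf V₀_open n).preimage
        (continuous_id.prodMk continuous_const)
    have K_comp : IsCompact (⋃ x ∈ s, {z | (z, x) ∈ dynEntourage f V₀ n})ᶜ :=
      A_open.isClosed_compl.isCompact
    refine ⟨n, s, (π '' (⋃ x ∈ s, {z | (z, x) ∈ dynEntourage f V₀ n})ᶜ)ᶜ, hn2,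
      (K_comp.image hπ).isClosed.isOpen_compl, ?_, ?_, ?_⟩
    · rintro ⟨x, xK, hxy⟩
      exact xK (by
        obtain ⟨z, hz, h⟩ := s_cover (show x ∈ π ⁻¹' {y} from hxy)
        exact Set.mem_iUnion₂.2 ⟨z, hz, h⟩)
    · intro x hx
      by_contra hxA
      exact hx ⟨x, fun h ↦ hxA (by
        obtain ⟨z, hz, h'⟩ := Set.mem_iUnion₂.1 h
        exact ⟨z, hz, h'⟩), rfl⟩
    · rw [← s_card] at hn1
      rwa [← ENat.toENNReal_coe]
  choose n s W n_pos W_open y_W cover hlog using key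
  obtain ⟨t, ht⟩ := isCompact_univ.elim_finite_subcover W W_open
    (fun y _ ↦ Set.mem_iUnion.2 ⟨y, y_W y⟩)
  have hXsub : (Set.univ : Set X) ⊆ ⋃ y ∈ t, π ⁻¹' (W y) := by
    intro x _
    obtain ⟨y, yt, hy⟩ := Set.mem_iUnion₂.1 (ht (Set.mem_univ (π x)))
    exact Set.mem_iUnion₂.2 ⟨y, yt, hy⟩
  calc coverEntropyEntourage f Set.univ U
      ≤ coverEntropyEntourage f Set.univ (V ○ V) := coverEntropyEntourage_antitone f Set.univ V_U
    _ ≤ coverEntropyEntourage f (⋃ y ∈ t, π ⁻¹' (W y)) (V ○ V) :=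
        coverEntropyEntourage_mono_set f hXsub (V ○ V)
    _ ≤ c := by
        refine coverEntropyEntourage_biUnion_le f _ (V ○ V) t fun y _ ↦ ?_
        have hc2 : IsDynCoverOf f (π ⁻¹' (W y)) V (n y) (s y) :=
          (cover y).of_entourage_subset V₀_V
        have := V_symm
        exact (hc2.coverEntropyEntourage_le_log_card_div (hfiber_inv (W y))
          (n_pos y).ne').trans (hlog y).le
end

section
/- Let X be a compact metric space, f : X → X a continuous map, and G a compact metrizable topological group acting continuously and freely on X such that f is G-equivariant. Let π : X → Y = X/G be the orbit map onto the orbit space with its quotient topology (a compact metrizable space), and let g : Y → Y be the induced continuous map satisfying g ∘ π = π ∘ f. Then h_top(f) = h_top(g). -/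
open Dynamics Set Uniformity UniformSpace Filter ENNReal EReal

section FreeQuotientEntropyAux

variable {X : Type*} [MetricSpace X] [CompactSpace X]
variable {G : Type*} [Group G] [TopologicalSpace G] [CompactSpace G]
  [MulAction G X] [ContinuousSMul G X]

private lemma fqe_exists_net {ε : ℝ} (hε : 0 < ε) :
    ∃ S : Finset G, S.Nonempty ∧ ∀ γ : G, ∃ s ∈ S, ∀ z : X, dist (γ • z) (s • z) < ε := by
  classical
  set Φ : C(G, C(X, X)) := ContinuousMap.curry ⟨fun p : G × X => p.1 • p.2, continuous_smul⟩
    with hΦ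
  have hcov : (univ : Set G) ⊆ ⋃ γ : G, Φ ⁻¹' (Metric.ball (Φ γ) ε) := by
    intro γ _
    exact mem_iUnion.2 ⟨γ, by simp [Metric.mem_ball, hε]⟩
  obtain ⟨S, hS⟩ := isCompact_univ.elim_finite_subcover
    (fun γ : G => Φ ⁻¹' (Metric.ball (Φ γ) ε))
    (fun γ => Metric.isOpen_ball.preimage Φ.continuous) hcov
  refine ⟨S, ?_, fun γ => ?_⟩
  · obtain ⟨s, hs⟩ := mem_iUnion₂.1 (hS (mem_univ (1 : G)))
    exact ⟨s, hs.1⟩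
  · obtain ⟨s, hsS, hγs⟩ := mem_iUnion₂.1 (hS (mem_univ γ))
    refine ⟨s, hsS, fun z => ?_⟩
    have h1 : dist (Φ γ) (Φ s) < ε := Metric.mem_ball.1 hγs
    have h2 : dist (Φ γ z) (Φ s z) ≤ dist (Φ γ) (Φ s) := ContinuousMap.dist_apply_le_dist z
    have h3 : Φ γ z = γ • z := rfl
    have h4 : Φ s z = s • z := rfl
    rw [h3, h4] at h2
    exact h2.trans_lt h1

omit [CompactSpace G] in
private lemma fqe_exists_delta {Y : Type*} [MetricSpace Y]
    (π : X → Y) (hπ : Continuous π)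
    (hπ_orbits : ∀ x x' : X, π x = π x' ↔ x' ∈ MulAction.orbit G x)
    {ε : ℝ} (hε : 0 < ε) :
    ∃ δ : ℝ, 0 < δ ∧ ∀ u v : X, dist (π u) (π v) < δ → ∃ γ : G, dist u (γ • v) < ε := by
  classical
  set C : Set (X × X) := {p | ∀ γ : G, ε ≤ dist p.1 (γ • p.2)} with hC
  have hC_closed : IsClosed C := by
    have : C = ⋂ γ : G, {p : X × X | ε ≤ dist p.1 (γ • p.2)} := by ext p; simp [hC]
    rw [this]
    exact isClosed_iInter fun γ =>
      isClosed_le continuous_const (continuous_fst.dist (continuous_snd.const_smul γ))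
  rcases C.eq_empty_or_nonempty with hCe | hCne
  · refine ⟨1, one_pos, fun u v _ => ?_⟩
    have h1 : (u, v) ∉ C := hCe ▸ notMem_empty _
    simpa [hC, not_forall, not_le] using h1
  · obtain ⟨p₀, hp₀, hmin⟩ := hC_closed.isCompact.exists_isMinOn hCne
      ((hπ.comp continuous_fst).dist (hπ.comp continuous_snd)).continuousOn
    refine ⟨dist (π p₀.1) (π p₀.2), ?_, fun u v h => ?_⟩
    · rcases (dist_nonneg (x := π p₀.1) (y := π p₀.2)).lt_or_eq with h' | h'
      · exact h'
      · exfalso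
        have h1 : π p₀.1 = π p₀.2 := dist_eq_zero.1 h'.symm
        obtain ⟨γ, hγ⟩ := (hπ_orbits p₀.1 p₀.2).1 h1
        have h2 := hp₀ γ⁻¹
        rw [← hγ, inv_smul_smul, dist_self] at h2
        exact absurd (hε.trans_le h2) (lt_irrefl 0)
    · by_contra hcon
      push_neg at hcon
      have hmem : (u, v) ∈ C := by intro γ; exact hcon γ
      exact absurd (hmin hmem) (not_le.2 h)

omit [CompactSpace G] in
private lemma fqe_exists_eps_iter (f : X → X) (hf : Continuous f) {ε : ℝ} (hε : 0 < ε) (m : ℕ) :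
    ∃ ε' : ℝ, 0 < ε' ∧ ε' ≤ ε ∧
      ∀ a b : X, dist a b < ε' → ∀ k < m, dist (f^[k] a) (f^[k] b) < ε := by
  induction m with
  | zero => exact ⟨ε, hε, le_refl ε, fun a b _ k hk => absurd hk (Nat.not_lt_zero k)⟩
  | succ m ih =>
    obtain ⟨ε₁, hε₁, hε₁ε, h₁⟩ := ih
    have hu : UniformContinuous (f^[m]) :=
      CompactSpace.uniformContinuous_of_continuous (hf.iterate m)
    obtain ⟨δ, hδ, h₂⟩ := Metric.uniformContinuous_iff.1 hu ε hε
    refine ⟨min ε₁ δ, lt_min hε₁ hδ, (min_le_left _ _).trans hε₁ε, fun a b hab k hk => ?_⟩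
    rcases Nat.lt_succ_iff_lt_or_eq.1 hk with hk' | rfl
    · exact h₁ a b (hab.trans_le (min_le_left _ _)) k hk'
    · exact h₂ (hab.trans_le (min_le_right _ _))

omit [CompactSpace G] in
private lemma fqe_coverMincard_bound
    (f : X → X) (hf : Continuous f)
    (h_equiv : ∀ (γ : G) (x : X), f (γ • x) = γ • f x)
    {Y : Type*} [MetricSpace Y] (π : X → Y) (hπc : Continuous π) (hπs : Function.Surjective π)
    (hπ_orbits : ∀ x x' : X, π x = π x' ↔ x' ∈ MulAction.orbit G x)
    (g : Y → Y) (hsemi : Function.Semiconj π f g)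
    {ε : ℝ} (hε : 0 < ε) (S : Finset G) (hS₀ : S.Nonempty)
    (hSnet : ∀ γ : G, ∃ s ∈ S, ∀ z : X, dist (γ • z) (s • z) < ε / 4)
    {m : ℕ} (hm : 0 < m) :
    ∃ δ : ℝ, 0 < δ ∧ ∀ n : ℕ,
      coverMincard f univ {p : X × X | dist p.1 p.2 < ε} n ≤
        coverMincard g univ {p : Y × Y | dist p.1 p.2 < δ} n
          * (S.card : ℕ∞) ^ (n / m + 1) := by
  classical
  obtain ⟨ε', hε'pos, hε'le, hε'iter⟩ := fqe_exists_eps_iter f hf (by linarith : (0:ℝ) < ε / 4) m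
  obtain ⟨δ, hδpos, hδ⟩ := fqe_exists_delta (G := G) π hπc hπ_orbits hε'pos
  refine ⟨δ, hδpos, fun n => ?_⟩
  rcases isEmpty_or_nonempty X with hX | hX
  · rw [Set.univ_eq_empty_iff.2 hX, coverMincard_empty]
    exact zero_le
  set U : Set (X × X) := {p : X × X | dist p.1 p.2 < ε} with hU
  set V : Set (Y × Y) := {p : Y × Y | dist p.1 p.2 < δ} with hV
  rcases eq_top_or_lt_top (coverMincard g univ V n) with htop | hlt
  · rw [htop, ENat.top_mul]
    · exact le_top
    · exact pow_ne_zero _ (by exact_mod_cast Finset.card_ne_zero_of_mem hS₀.choose_spec)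
  obtain ⟨E, hEcov, hEcard⟩ := (coverMincard_finite_iff g univ V n).1 hlt
  set lift : Y → X := Function.surjInv hπs with hlift
  have hlift_eq : ∀ y, π (lift y) = y := fun y => Function.surjInv_eq hπs y
  have h_equiv_iter : ∀ (k : ℕ) (γ : G) (z : X), γ • f^[k] z = f^[k] (γ • z) :=
    fun k γ => (Function.Semiconj.iterate_right (fun z => (h_equiv γ z).symm) k)
  have hsemi_iter : ∀ (k : ℕ) (x : X), π (f^[k] x) = g^[k] (π x) :=
    fun k x => (Function.Semiconj.iterate_right hsemi k) x
  set J := n / m + 1 with hJ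
  set ext : (Fin J → G) → ℕ → G := fun σ j => if h : j < J then σ ⟨j, h⟩ else 1 with hext
  set D : Y × (Fin J → G) → Set X := fun p =>
    {x | ∀ t < n, dist (f^[t] x) (ext p.2 (t / m) • f^[t] (lift p.1)) < ε / 2} with hD
  set rep : Y × (Fin J → G) → X := fun p =>
    if h : (D p).Nonempty then h.choose else Classical.arbitrary X with hrep
  set A : Finset (Y × (Fin J → G)) := E ×ˢ Fintype.piFinset (fun _ : Fin J => S) with hA
  have hcover : IsDynCoverOf f univ U n (A.image rep : Finset X) := by
    intro x _
    obtain ⟨y, hyE, hy⟩ := hEcov (mem_univ (π x))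
    have hyE' : y ∈ E := hyE
    have hclose : ∀ k < n, dist (g^[k] y) (g^[k] (π x)) < δ := by
      intro k hk
      rw [dist_comm]
      exact mem_dynEntourage.1 hy k hk
    have hchoice : ∀ j : Fin J, ∃ s ∈ S,
        ∀ t < n, t / m = (j : ℕ) → dist (f^[t] x) (s • f^[t] (lift y)) < ε / 2 := by
      intro j
      by_cases hjn : m * (j : ℕ) < n
      · have h1 : dist (π (f^[m * (j : ℕ)] x)) (π (f^[m * (j : ℕ)] (lift y))) < δ := by
          rw [hsemi_iter, hsemi_iter, hlift_eq, dist_comm]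
          exact hclose _ hjn
        obtain ⟨γ, hγ⟩ := hδ _ _ h1
        obtain ⟨s, hsS, hs⟩ := hSnet γ
        refine ⟨s, hsS, fun t ht hdiv => ?_⟩
        have hkm : t % m < m := Nat.mod_lt t hm
        have hiter : ∀ z : X, f^[t] z = f^[t % m] (f^[m * (t / m)] z) := by
          intro z
          conv_lhs => rw [← Nat.mod_add_div t m]
          exact Function.iterate_add_apply f _ _ z
        calc dist (f^[t] x) (s • f^[t] (lift y))
            ≤ dist (f^[t] x) (γ • f^[t] (lift y))
              + dist (γ • f^[t] (lift y)) (s • f^[t] (lift y)) := dist_triangle _ _ _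
          _ < ε / 4 + ε / 4 := by
              refine add_lt_add ?_ (hs _)
              rw [hiter, hiter, h_equiv_iter, hdiv]
              exact hε'iter _ _ hγ _ hkm
          _ = ε / 2 := by ring
      · obtain ⟨s, hsS⟩ := hS₀
        refine ⟨s, hsS, fun t ht hdiv => absurd ?_ (Nat.not_lt.2 (le_of_not_gt hjn))⟩
        calc m * (j : ℕ) = m * (t / m) := by rw [hdiv]
          _ ≤ t := Nat.mul_div_le t m
          _ < n := ht
    choose σ hσS hσ using hchoice
    have hxD : x ∈ D (y, σ) := by
      intro t ht
      have htJ : t / m < J := Nat.lt_succ_of_le (Nat.div_le_div_right ht.le)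
      have hx1 : ext σ (t / m) = σ ⟨t / m, htJ⟩ := by
        simp only [hext, dif_pos htJ]
      rw [hx1]
      exact hσ ⟨t / m, htJ⟩ t ht rfl
    have hAmem : (y, σ) ∈ A := by
      rw [hA, Finset.mem_product]
      exact ⟨hyE', Fintype.mem_piFinset.2 fun j => hσS j⟩
    have hDne : (D (y, σ)).Nonempty := ⟨x, hxD⟩
    have hrepD : rep (y, σ) ∈ D (y, σ) := by
      rw [hrep]; simp only [dif_pos hDne]; exact hDne.choose_spec
    refine ⟨rep (y, σ), Finset.mem_coe.2 (Finset.mem_image_of_mem rep hAmem), ?_⟩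
    rw [mem_dynEntourage]
    intro k hk
    have h1 := hrepD k hk
    have h2 := hxD k hk
    show (f^[k] x, f^[k] (rep (y, σ))) ∈ U
    rw [hU, mem_setOf_eq, dist_comm]
    calc dist (f^[k] (rep (y, σ))) (f^[k] x)
        ≤ dist (f^[k] (rep (y, σ))) (ext σ (k / m) • f^[k] (lift y))
          + dist (ext σ (k / m) • f^[k] (lift y)) (f^[k] x) := dist_triangle _ _ _
      _ < ε / 2 + ε / 2 := add_lt_add h1 (by rw [dist_comm]; exact h2)
      _ = ε := by ring
  calc coverMincard f univ U n ≤ ((A.image rep).card : ℕ∞) := hcover.coverMincard_le_card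
    _ ≤ (A.card : ℕ∞) := by exact_mod_cast Finset.card_image_le
    _ = ((E.card * S.card ^ J : ℕ) : ℕ∞) := by
        rw [hA, Finset.card_product, Fintype.card_piFinset]
        simp [Finset.prod_const]
    _ = (E.card : ℕ∞) * (S.card : ℕ∞) ^ J := by push_cast; ring
    _ = coverMincard g univ V n * (S.card : ℕ∞) ^ (n / m + 1) := by rw [hEcard, hJ]

private lemma fqe_limsup_aux {u v : ℕ → ℕ∞} {K m : ℕ} (hK : 1 ≤ K) (hm : 0 < m)
    (hv : ∀ n, 1 ≤ v n)
    (h : ∀ n, u n ≤ v n * (K : ℕ∞) ^ (n / m + 1)) :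
    atTop.limsup (fun n : ℕ => log (u n) / n) ≤
      atTop.limsup (fun n : ℕ => log (v n) / n) + ((2 * Real.log K / m : ℝ) : EReal) := by
  set ℓ : ℝ := Real.log K with hℓdef
  have hℓ0 : 0 ≤ ℓ := Real.log_nonneg (by exact_mod_cast hK)
  set c : EReal := ((2 * ℓ / m : ℝ) : EReal) with hc
  have hlogK : log ((K : ℕ∞) : ℝ≥0∞) = (ℓ : EReal) := by
    rw [ENat.toENNReal_coe, log_pos_real' (by simp [Nat.pos_of_ne_zero]; omega)]
    simp
    rfl
  have hev : ∀ n : ℕ, m ≤ n → log (u n) / n ≤ log (v n) / n + c := by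
    intro n hn
    have hn1 : 1 ≤ n := hm.trans_le hn
    set J := n / m + 1 with hJ
    have key1 : log (u n) ≤ log (v n) + (J : EReal) * ℓ := by
      have h1 : ((u n : ℝ≥0∞)) ≤ ((v n : ℝ≥0∞)) * ((K : ℕ∞) : ℝ≥0∞) ^ J := by
        rw [← ENat.toENNReal_pow, ← ENat.toENNReal_mul]
        exact ENat.toENNReal_le.2 (h n)
      calc log (u n) ≤ log (((v n : ℝ≥0∞)) * ((K : ℕ∞) : ℝ≥0∞) ^ J) := log_monotone h1
        _ = log (v n) + (J : EReal) * ℓ := by rw [log_mul_add, log_pow, hlogK]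
    have hvlog : (0 : EReal) ≤ log (v n) := by
      apply zero_le_log_iff.2
      exact_mod_cast hv n
    have hJl : (0 : EReal) ≤ (J : EReal) * ℓ :=
      mul_nonneg (by exact_mod_cast Nat.zero_le J) (by exact_mod_cast hℓ0)
    have key2 : log (u n) / n ≤ (log (v n) + (J : EReal) * ℓ) / n :=
      monotone_div_right_of_nonneg (Nat.cast_nonneg' n) key1
    rw [div_right_distrib_of_nonneg hvlog hJl] at key2
    refine key2.trans (add_le_add_right ?_ _)
    have hJm : (J : ℝ) * m ≤ 2 * n := by
      have h2 : J * m ≤ 2 * n := by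
        have h1 : n / m * m ≤ n := Nat.div_mul_le_self n m
        calc J * m = n / m * m + m := by rw [hJ]; ring
          _ ≤ n + m := by omega
          _ ≤ 2 * n := by omega
      exact_mod_cast h2
    have hreal : (J : ℝ) * ℓ / n ≤ 2 * ℓ / m := by
      rw [div_le_div_iff₀ (by positivity) (by exact_mod_cast hm)]
      nlinarith [mul_le_mul_of_nonneg_left hJm hℓ0]
    calc ((J : EReal) * ℓ) / (n : EReal)
        = (((J : ℝ) * ℓ / n : ℝ) : EReal) := by
          rw [EReal.coe_div, EReal.coe_mul, EReal.coe_coe_eq_natCast, EReal.coe_coe_eq_natCast]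
      _ ≤ c := by rw [hc]; exact EReal.coe_le_coe_iff.2 hreal
  have hev' : (fun n : ℕ => log (u n) / n) ≤ᶠ[atTop]
      (fun n : ℕ => log (v n) / n) + (fun _ => c) :=
    eventually_atTop.2 ⟨m, fun n hn => hev n hn⟩
  calc atTop.limsup (fun n : ℕ => log (u n) / n)
      ≤ atTop.limsup ((fun n : ℕ => log (v n) / n) + fun _ => c) := limsup_le_limsup hev'
    _ ≤ atTop.limsup (fun n : ℕ => log (v n) / n) + atTop.limsup (fun _ : ℕ => c) := by
        refine EReal.limsup_add_le (Or.inr ?_) (Or.inr ?_)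
        · rw [limsup_const]; exact EReal.coe_ne_top _
        · rw [limsup_const]; exact EReal.coe_ne_bot _
    _ = atTop.limsup (fun n : ℕ => log (v n) / n) + c := by rw [limsup_const]

private lemma fqe_entourage_le
    (f : X → X) (hf : Continuous f)
    (h_equiv : ∀ (γ : G) (x : X), f (γ • x) = γ • f x)
    {Y : Type*} [MetricSpace Y] [CompactSpace Y]
    (π : X → Y) (hπc : Continuous π) (hπs : Function.Surjective π)
    (hπ_orbits : ∀ x x' : X, π x = π x' ↔ x' ∈ MulAction.orbit G x)
    (g : Y → Y) (hsemi : Function.Semiconj π f g)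
    {ε : ℝ} (hε : 0 < ε) :
    coverEntropyEntourage f univ {p : X × X | dist p.1 p.2 < ε} ≤ coverEntropy g univ := by
  rcases isEmpty_or_nonempty X with hX | hX
  · rw [Set.univ_eq_empty_iff.2 hX, coverEntropyEntourage_empty]
    exact bot_le
  have hY : Nonempty Y := ⟨π (Classical.arbitrary X)⟩
  obtain ⟨S, hS₀, hSnet⟩ := fqe_exists_net (G := G) (X := X) (by linarith : (0:ℝ) < ε / 4)
  set K := S.card with hK'
  have hK : 1 ≤ K := Finset.card_pos.2 hS₀
  set ℓ : ℝ := Real.log K with hℓ'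
  have hℓ0 : 0 ≤ ℓ := Real.log_nonneg (by exact_mod_cast hK)
  set A := coverEntropyEntourage f univ {p : X × X | dist p.1 p.2 < ε} with hAdef
  set B := coverEntropy g univ with hBdef
  have hstep : ∀ m : ℕ, 0 < m → A ≤ B + ((2 * ℓ / m : ℝ) : EReal) := by
    intro m hm
    obtain ⟨δ, hδpos, hbound⟩ :=
      fqe_coverMincard_bound f hf h_equiv π hπc hπs hπ_orbits g hsemi hε S hS₀ hSnet hm
    have h1 : A ≤ coverEntropyEntourage g univ {p : Y × Y | dist p.1 p.2 < δ}
        + ((2 * ℓ / m : ℝ) : EReal) :=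
      fqe_limsup_aux hK hm
        (fun n => (one_le_coverMincard_iff g univ _ n).2 univ_nonempty) hbound
    refine h1.trans (add_le_add_left ?_ _)
    exact coverEntropyEntourage_le_coverEntropy g univ (Metric.dist_mem_uniformity hδpos)
  rcases eq_top_or_lt_top B with hB | hBlt
  · rw [hB]; exact le_top
  rcases eq_bot_or_bot_lt B with hB | hBb
  · have h1 := hstep 1 one_pos
    rw [hB, EReal.bot_add] at h1
    exact h1.trans bot_le
  by_contra hAB
  push_neg at hAB
  obtain ⟨r, hBr, hrA⟩ := EReal.lt_iff_exists_real_btwn.1 hAB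
  set b : ℝ := B.toReal with hb'
  have hBb' : (b : EReal) = B := EReal.coe_toReal hBlt.ne hBb.ne'
  have hbr : b < r := by
    rw [← hBb'] at hBr
    exact EReal.coe_lt_coe_iff.1 hBr
  obtain ⟨m, hmgt⟩ := exists_nat_gt (2 * ℓ / (r - b))
  have hm0 : 0 < m := by
    have hpos : (0:ℝ) ≤ 2 * ℓ / (r - b) := div_nonneg (by linarith) (by linarith)
    have hmr : (0:ℝ) < m := lt_of_le_of_lt hpos hmgt
    exact_mod_cast hmr
  have h2 : 2 * ℓ / m < r - b := by
    rw [div_lt_iff₀ (by exact_mod_cast hm0)]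
    have h3 : 2 * ℓ < m * (r - b) := (div_lt_iff₀ (by linarith)).1 hmgt
    linarith
  have h4 := hstep m hm0
  rw [← hBb', ← EReal.coe_add] at h4
  have h5 : A < A :=
    lt_of_le_of_lt (h4.trans (EReal.coe_le_coe_iff.2 (by linarith))) hrA
  exact absurd h5 (lt_irrefl A)

end FreeQuotientEntropyAux

/-- Let `X` be a compact metric space, `f : X → X` continuous, and `G` a compact
metrizable topological group acting continuously and freely on `X`, with `f`
`G`-equivariant. Let `π : X → Y = X/G` be the orbit map onto the orbit space with its
quotient topology (a compact metrizable space, here given a compatible metric), and let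
`g : Y → Y` be the induced continuous map, `g ∘ π = π ∘ f`. Then `h_top(f) = h_top(g)`. -/
theorem entropy_eq_entropy_of_free_quotient {X : Type*} [MetricSpace X] [CompactSpace X]
    (f : X → X) (hf : Continuous f)
    (G : Type*) [Group G] [TopologicalSpace G] [CompactSpace G]
    [TopologicalSpace.MetrizableSpace G] [IsTopologicalGroup G]
    [MulAction G X] [ContinuousSMul G X]
    (h_free : ∀ (γ : G) (x : X), γ • x = x → γ = 1)
    (h_equiv : ∀ (γ : G) (x : X), f (γ • x) = γ • f x)
    {Y : Type*} [MetricSpace Y] [CompactSpace Y]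
    (π : X → Y) (hπ_quot : Topology.IsQuotientMap π)
    (hπ_orbits : ∀ x x' : X, π x = π x' ↔ x' ∈ MulAction.orbit G x)
    (g : Y → Y) (hg : Continuous g) (hcomm : g ∘ π = π ∘ f) :
    coverEntropy f Set.univ = coverEntropy g Set.univ := by
  have hπc : Continuous π := hπ_quot.continuous
  have hπs : Function.Surjective π := hπ_quot.surjective
  have hsemi : Function.Semiconj π f g := fun x => (congrFun hcomm x).symm
  apply le_antisymm
  · rw [coverEntropy_eq_iSup_basis Metric.uniformity_basis_dist f Set.univ]
    refine iSup₂_le fun ε hε => ?_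
    exact fqe_entourage_le f hf h_equiv π hπc hπs hπ_orbits g hsemi hε
  · have h1 := coverEntropy_image_le_of_uniformContinuous hsemi
      (CompactSpace.uniformContinuous_of_continuous hπc) Set.univ
    rwa [Set.image_univ, hπs.range_eq] at h1
end
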